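/- Let P_J ~ Uniform[0, P_max] and let S = P_J · c + σ² for constants c > 0, σ² > 0. For any threshold τ, define P_FA(τ) = Pr(S > τ) and P_MD(τ) = Pr(S + d < τ) for a constant d > 0 with d ≤ c·P_max. Then for every τ, P_FA(τ) + P_MD(τ) ≥ 1 − d/(c·P_max), with equality attained for all τ ∈ [σ² + d, σ² + c·P_max]. -/

import Mathlib

open MeasureTheory Set

lemma vol_Ioi_inter (a Pmax : ℝ) (hP : 0 < Pmax) :
    volume (Ioi a ∩ Icc 0 Pmax) = ENNReal.ofReal (Pmax - min (max a 0) Pmax) := by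
  rcases le_or_gt 0 a with h | h
  · have hset : Ioi a ∩ Icc 0 Pmax = Ioc a Pmax := by
      ext x
      simp only [mem_inter_iff, mem_Ioi, mem_Icc, mem_Ioc]
      constructor
      · rintro ⟨h1, h2, h3⟩; exact ⟨h1, h3⟩
      · rintro ⟨h1, h2⟩; exact ⟨h1, by linarith, h2⟩
    rw [hset, Real.volume_Ioc, max_eq_left h]
    rcases le_or_gt a Pmax with h2 | h2
    · rw [min_eq_left h2]
    · rw [min_eq_right h2.le]
      rw [ENNReal.ofReal_eq_zero.mpr (by linarith), ENNReal.ofReal_eq_zero.mpr (by linarith)]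
  · have hset : Ioi a ∩ Icc 0 Pmax = Icc 0 Pmax := by
      ext x
      simp only [mem_inter_iff, mem_Ioi, mem_Icc]
      constructor
      · rintro ⟨_, h2⟩; exact h2
      · rintro ⟨h1, h2⟩; exact ⟨by linarith, h1, h2⟩
    rw [hset, Real.volume_Icc, max_eq_right h.le, min_eq_left hP.le, sub_zero]

lemma vol_Iio_inter (b Pmax : ℝ) (hP : 0 < Pmax) :
    volume (Iio b ∩ Icc 0 Pmax) = ENNReal.ofReal (min (max b 0) Pmax) := by
  rcases le_or_gt b Pmax with h | h
  · have hset : Iio b ∩ Icc 0 Pmax = Ico 0 b := by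
      ext x
      simp only [mem_inter_iff, mem_Iio, mem_Icc, mem_Ico]
      constructor
      · rintro ⟨h1, h2, h3⟩; exact ⟨h2, h1⟩
      · rintro ⟨h1, h2⟩; exact ⟨h2, h1, by linarith⟩
    rw [hset, Real.volume_Ico, sub_zero]
    have : min (max b 0) Pmax = max b 0 := min_eq_left (by rw [max_le_iff]; exact ⟨h, hP.le⟩)
    rw [this]
    rcases le_or_gt b 0 with h2 | h2
    · rw [max_eq_right h2, ENNReal.ofReal_eq_zero.mpr h2, ENNReal.ofReal_zero]
    · rw [max_eq_left h2.le]
  · have hset : Iio b ∩ Icc 0 Pmax = Icc 0 Pmax := by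
      ext x
      simp only [mem_inter_iff, mem_Iio, mem_Icc]
      constructor
      · rintro ⟨_, h2⟩; exact h2
      · rintro ⟨h1, h2⟩; exact ⟨by linarith, h1, h2⟩
    rw [hset, Real.volume_Icc, sub_zero, min_eq_right (le_trans h.le (le_max_left _ _))]

lemma clamp_lip (Pmax x y : ℝ) (hP : 0 < Pmax) (hxy : y ≤ x) :
    min (max x 0) Pmax - min (max y 0) Pmax ≤ x - y := by
  rcases le_total x 0 with h1 | h1 <;> rcases le_total y 0 with h2 | h2 <;>
    rcases le_total x Pmax with h3 | h3 <;> rcases le_total y Pmax with h4 | h4 <;>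
    simp [min_def, max_def] <;> split_ifs <;> linarith

theorem stmt_19 (c σ2 d Pmax : ℝ)
    (hc : 0 < c) (hσ : 0 < σ2) (hd : 0 < d) (hP : 0 < Pmax)
    (hdc : d ≤ c * Pmax)
    (μ : Measure ℝ)
    (hμ : μ = (ENNReal.ofReal Pmax)⁻¹ • (volume.restrict (Icc (0:ℝ) Pmax)))
    (PFA PMD : ℝ → ℝ)
    (hPFA : ∀ τ, PFA τ = (μ {x : ℝ | x * c + σ2 > τ}).toReal)
    (hPMD : ∀ τ, PMD τ = (μ {x : ℝ | x * c + σ2 + d < τ}).toReal) :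
    (∀ τ : ℝ, PFA τ + PMD τ ≥ 1 - d / (c * Pmax)) ∧
    (∀ τ ∈ Icc (σ2 + d) (σ2 + c * Pmax), PFA τ + PMD τ = 1 - d / (c * Pmax)) := by
  -- compute PFA and PMD explicitly
  have hca : ∀ a : ℝ, min (max a 0) Pmax ≤ Pmax := fun a => min_le_right _ _
  have hcb : ∀ a : ℝ, 0 ≤ min (max a 0) Pmax := fun a =>
    le_min (le_max_right _ _) hP.le
  have hFA : ∀ τ : ℝ, PFA τ = (Pmax - min (max ((τ - σ2) / c) 0) Pmax) / Pmax := by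
    intro τ
    have hset : {x : ℝ | x * c + σ2 > τ} = Ioi ((τ - σ2) / c) := by
      ext x
      simp only [mem_setOf_eq, mem_Ioi, gt_iff_lt, div_lt_iff₀ hc]
      constructor <;> intro h <;> nlinarith
    rw [hPFA τ, hset, hμ, Measure.smul_apply, Measure.restrict_apply measurableSet_Ioi,
      vol_Ioi_inter _ _ hP, smul_eq_mul, ENNReal.toReal_mul, ENNReal.toReal_inv,
      ENNReal.toReal_ofReal hP.le, ENNReal.toReal_ofReal (by linarith [hca ((τ - σ2) / c)])]
    rw [inv_mul_eq_div]
  have hMD : ∀ τ : ℝ, PMD τ = (min (max ((τ - σ2 - d) / c) 0) Pmax) / Pmax := by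
    intro τ
    have hset : {x : ℝ | x * c + σ2 + d < τ} = Iio ((τ - σ2 - d) / c) := by
      ext x
      simp only [mem_setOf_eq, mem_Iio, lt_div_iff₀ hc]
      constructor <;> intro h <;> nlinarith
    rw [hPMD τ, hset, hμ, Measure.smul_apply, Measure.restrict_apply measurableSet_Iio,
      vol_Iio_inter _ _ hP, smul_eq_mul, ENNReal.toReal_mul, ENNReal.toReal_inv,
      ENNReal.toReal_ofReal hP.le, ENNReal.toReal_ofReal (hcb _)]
    rw [inv_mul_eq_div]
  constructor
  · intro τ
    rw [hFA τ, hMD τ]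
    set a := (τ - σ2) / c with ha
    set b := (τ - σ2 - d) / c with hb
    have hab : b ≤ a := by
      rw [ha, hb, div_le_div_iff₀ hc hc]; nlinarith
    have hdiff : a - b = d / c := by
      rw [ha, hb]; field_simp; ring
    have hkey := clamp_lip Pmax a b hP hab
    rw [hdiff] at hkey
    have h1 : d / (c * Pmax) = (d / c) / Pmax := by field_simp
    rw [ge_iff_le, h1, ← add_div]
    have heq : (Pmax - min (max a 0) Pmax + min (max b 0) Pmax) / Pmax
        = 1 - (min (max a 0) Pmax - min (max b 0) Pmax) / Pmax := by
      field_simp; ring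
    rw [heq]
    have : (min (max a 0) Pmax - min (max b 0) Pmax) / Pmax ≤ (d / c) / Pmax :=
      div_le_div_of_nonneg_right hkey hP.le
    linarith
  · rintro τ ⟨hτ1, hτ2⟩
    rw [hFA τ, hMD τ]
    have ha0 : 0 ≤ (τ - σ2) / c := div_nonneg (by linarith) hc.le
    have haP : (τ - σ2) / c ≤ Pmax := by rw [div_le_iff₀ hc]; nlinarith
    have hb0 : 0 ≤ (τ - σ2 - d) / c := div_nonneg (by linarith) hc.le
    have hbP : (τ - σ2 - d) / c ≤ Pmax := by rw [div_le_iff₀ hc]; nlinarith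
    rw [max_eq_left ha0, min_eq_left haP, max_eq_left hb0, min_eq_left hbP]
    field_simp
    ring
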